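/- (E(3)-invariance of the attention weights in the bilevel attention module.) In the bilevel attention setup, both the atom-level attentions α_j[p,q] = exp(R_j[p,q]) / ∑_{q'} exp(R_j[p,q']) and the block-level attentions β_j = exp(r_j) / ∑_{j'∈J} exp(r_{j'}), with r_j = (1/(nᵢ n_j)) ∑_{p,q} R_j[p,q] + e_j, are invariant under rigid motions: replacing every coordinate x by Q x + t, for any 3×3 real orthogonal matrix Q and t ∈ ℝ³ applied uniformly to all atoms of all blocks, leaves all α_j[p,q] and all β_j unchanged. -/
import Mathlib


open scoped BigOperators RealInnerProductSpace

/-- Atom-level correlation between block `i` and a neighbor block `j`: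
`R[p,q] = (1/√d_r) ⟨W_Qᵀ hᵢ(p), W_Kᵀ h_j(q)⟩ + σ_D(‖xᵢ(p) − x_j(q)‖)`. -/
noncomputable def Rcorr {d dr ni nj : ℕ}
    (WQ WK : Matrix (Fin d) (Fin dr) ℝ) (σD : ℝ → ℝ)
    (hi : Fin ni → EuclideanSpace ℝ (Fin d)) (xi : Fin ni → EuclideanSpace ℝ (Fin 3))
    (hj : Fin nj → EuclideanSpace ℝ (Fin d)) (xj : Fin nj → EuclideanSpace ℝ (Fin 3))
    (p : Fin ni) (q : Fin nj) : ℝ :=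
  (1 / Real.sqrt dr) *
      ⟪Matrix.toEuclideanLin WQ.transpose (hi p),
        Matrix.toEuclideanLin WK.transpose (hj q)⟫
    + σD ‖xi p - xj q‖

/-- Atom-level cross attention `α[p,q] = exp(R[p,q]) / ∑_{q'} exp(R[p,q'])`. -/
noncomputable def alphaAtt {d dr ni nj : ℕ}
    (WQ WK : Matrix (Fin d) (Fin dr) ℝ) (σD : ℝ → ℝ)
    (hi : Fin ni → EuclideanSpace ℝ (Fin d)) (xi : Fin ni → EuclideanSpace ℝ (Fin 3))
    (hj : Fin nj → EuclideanSpace ℝ (Fin d)) (xj : Fin nj → EuclideanSpace ℝ (Fin 3))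
    (p : Fin ni) (q : Fin nj) : ℝ :=
  Real.exp (Rcorr WQ WK σD hi xi hj xj p q) /
    ∑ q' : Fin nj, Real.exp (Rcorr WQ WK σD hi xi hj xj p q')

/-- Block-level correlation `r_j = (1/(nᵢ n_j)) ∑_{p,q} R_j[p,q] + e_j`. -/
noncomputable def rBlock {d dr ni nj : ℕ}
    (WQ WK : Matrix (Fin d) (Fin dr) ℝ) (σD : ℝ → ℝ)
    (hi : Fin ni → EuclideanSpace ℝ (Fin d)) (xi : Fin ni → EuclideanSpace ℝ (Fin 3))
    (hj : Fin nj → EuclideanSpace ℝ (Fin d)) (xj : Fin nj → EuclideanSpace ℝ (Fin 3))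
    (ej : ℝ) : ℝ :=
  (1 / ((ni : ℝ) * (nj : ℝ))) *
      (∑ p : Fin ni, ∑ q : Fin nj, Rcorr WQ WK σD hi xi hj xj p q)
    + ej

/-- Block-level cross attention `β_j = exp(r_j) / ∑_{j'∈J} exp(r_{j'})`. -/
noncomputable def betaAtt {d dr ni : ℕ} {ι : Type*} [Fintype ι]
    (WQ WK : Matrix (Fin d) (Fin dr) ℝ) (σD : ℝ → ℝ)
    (hi : Fin ni → EuclideanSpace ℝ (Fin d)) (xi : Fin ni → EuclideanSpace ℝ (Fin 3))
    (nb : ι → ℕ)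
    (hb : ∀ j, Fin (nb j) → EuclideanSpace ℝ (Fin d))
    (xb : ∀ j, Fin (nb j) → EuclideanSpace ℝ (Fin 3))
    (e : ι → ℝ) (j : ι) : ℝ :=
  Real.exp (rBlock WQ WK σD hi xi (hb j) (xb j) (e j)) /
    ∑ j' : ι, Real.exp (rBlock WQ WK σD hi xi (hb j') (xb j') (e j'))


open scoped Matrix in
private lemma orth_norm_preserve' {n : ℕ} (Q : Matrix (Fin n) (Fin n) ℝ)
    (hQ : Q ∈ Matrix.orthogonalGroup (Fin n) ℝ) (v : EuclideanSpace ℝ (Fin n)) :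
    ‖Matrix.toEuclideanLin Q v‖ = ‖v‖ := by
  have h1 : Qᴴ * Q = 1 := Matrix.mem_unitaryGroup_iff'.mp hQ
  have h2 : ⟪Matrix.toEuclideanLin Q v, Matrix.toEuclideanLin Q v⟫ = ⟪v, v⟫ := by
    have hadj := Matrix.toEuclideanLin_conjTranspose_eq_adjoint Q
    calc ⟪Matrix.toEuclideanLin Q v, Matrix.toEuclideanLin Q v⟫
        = ⟪Matrix.toEuclideanLin Qᴴ (Matrix.toEuclideanLin Q v), v⟫ := by
          rw [hadj, LinearMap.adjoint_inner_left]
      _ = ⟪v, v⟫ := by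
          have : Matrix.toEuclideanLin Qᴴ (Matrix.toEuclideanLin Q v)
              = Matrix.toEuclideanLin (Qᴴ * Q) v := by
            simp [Matrix.toEuclideanLin_apply, Matrix.mulVec_mulVec]
          rw [this, h1]
          simp [Matrix.toEuclideanLin_apply]
  have h3 := congrArg Real.sqrt h2
  rwa [real_inner_self_eq_norm_sq, real_inner_self_eq_norm_sq,
    Real.sqrt_sq (norm_nonneg _), Real.sqrt_sq (norm_nonneg _)] at h3

private lemma Rcorr_invariant' {d dr ni nj : ℕ}
    (WQ WK : Matrix (Fin d) (Fin dr) ℝ) (σD : ℝ → ℝ)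
    (hi : Fin ni → EuclideanSpace ℝ (Fin d)) (xi : Fin ni → EuclideanSpace ℝ (Fin 3))
    (hj : Fin nj → EuclideanSpace ℝ (Fin d)) (xj : Fin nj → EuclideanSpace ℝ (Fin 3))
    (Q : Matrix (Fin 3) (Fin 3) ℝ) (hQ : Q ∈ Matrix.orthogonalGroup (Fin 3) ℝ)
    (t : EuclideanSpace ℝ (Fin 3)) (p : Fin ni) (q : Fin nj) :
    Rcorr WQ WK σD hi (fun p => Matrix.toEuclideanLin Q (xi p) + t)
        hj (fun q => Matrix.toEuclideanLin Q (xj q) + t) p q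
      = Rcorr WQ WK σD hi xi hj xj p q := by
  unfold Rcorr
  congr 2
  have : (Matrix.toEuclideanLin Q (xi p) + t) - (Matrix.toEuclideanLin Q (xj q) + t)
      = Matrix.toEuclideanLin Q (xi p - xj q) := by
    rw [map_sub]; abel
  rw [this, orth_norm_preserve' Q hQ]

theorem attention_weights_E3_invariant {d dr ni : ℕ} {ι : Type*} [Fintype ι] [Nonempty ι]
    (hni : 1 ≤ ni) (nb : ι → ℕ) (hnb : ∀ j, 1 ≤ nb j)
    (WQ WK : Matrix (Fin d) (Fin dr) ℝ) (σD : ℝ → ℝ)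
    (hi : Fin ni → EuclideanSpace ℝ (Fin d)) (xi : Fin ni → EuclideanSpace ℝ (Fin 3))
    (hb : ∀ j, Fin (nb j) → EuclideanSpace ℝ (Fin d))
    (xb : ∀ j, Fin (nb j) → EuclideanSpace ℝ (Fin 3))
    (e : ι → ℝ)
    (Q : Matrix (Fin 3) (Fin 3) ℝ) (hQ : Q ∈ Matrix.orthogonalGroup (Fin 3) ℝ)
    (t : EuclideanSpace ℝ (Fin 3)) :
    (∀ (j : ι) (p : Fin ni) (q : Fin (nb j)),
        alphaAtt WQ WK σD hi (fun p => Matrix.toEuclideanLin Q (xi p) + t)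
            (hb j) (fun q => Matrix.toEuclideanLin Q (xb j q) + t) p q
          = alphaAtt WQ WK σD hi xi (hb j) (xb j) p q) ∧
    (∀ j : ι,
        betaAtt WQ WK σD hi (fun p => Matrix.toEuclideanLin Q (xi p) + t)
            nb hb (fun j q => Matrix.toEuclideanLin Q (xb j q) + t) e j
          = betaAtt WQ WK σD hi xi nb hb xb e j) := by
  have hR : ∀ (j : ι) (p : Fin ni) (q : Fin (nb j)),
      Rcorr WQ WK σD hi (fun p => Matrix.toEuclideanLin Q (xi p) + t)
        (hb j) (fun q => Matrix.toEuclideanLin Q (xb j q) + t) p q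
      = Rcorr WQ WK σD hi xi (hb j) (xb j) p q :=
    fun j p q => Rcorr_invariant' WQ WK σD hi xi (hb j) (xb j) Q hQ t p q
  constructor
  · intro j p q
    unfold alphaAtt
    simp only [hR]
  · intro j
    unfold betaAtt rBlock
    simp only [hR]
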